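/- A subset W ⊂ ℝⁿ is polytopal (compact, equal to the closure of its interior, with boundary contained in a finite union of properly supporting hyperplanes) if and only if W is a finite union of convex polytopes, each compact with nonempty interior. -/

import Mathlib

open Set

variable {n : ℕ}

/-- A hyperplane `H` (level set of a nonzero linear functional) is properly supporting for
`W` if near some point `w ∈ H`, `W` coincides with one of the closed half-spaces of `H`. -/
def ProperlySupporting (W H : Set (EuclideanSpace ℝ (Fin n))) : Prop :=
  ∃ (f : EuclideanSpace ℝ (Fin n) →ₗ[ℝ] ℝ) (c : ℝ), f ≠ 0 ∧ H = {x | f x = c} ∧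
    ∃ w ∈ H, ∃ U : Set (EuclideanSpace ℝ (Fin n)), IsOpen U ∧ w ∈ U ∧
      (W ∩ U = {x | f x ≤ c} ∩ U ∨ W ∩ U = {x | c ≤ f x} ∩ U)

/-- `W` is polytopal if it is compact, equal to the closure of its interior, and its
boundary is contained in a finite union of properly supporting hyperplanes. -/
def IsPolytopal (W : Set (EuclideanSpace ℝ (Fin n))) : Prop :=
  IsCompact W ∧ W = closure (interior W) ∧
    ∃ 𝓗 : Set (Set (EuclideanSpace ℝ (Fin n))), 𝓗.Finite ∧
      (∀ H ∈ 𝓗, ProperlySupporting W H) ∧ frontier W ⊆ ⋃₀ 𝓗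

/-- A convex polytope: a compact intersection of finitely many closed half-spaces with
nonempty interior. -/
def IsConvexPolytope (C : Set (EuclideanSpace ℝ (Fin n))) : Prop :=
  IsCompact C ∧ (interior C).Nonempty ∧
    ∃ s : Finset ((EuclideanSpace ℝ (Fin n) →ₗ[ℝ] ℝ) × ℝ),
      C = ⋂ p ∈ s, {x | p.1 x ≤ p.2}


open MeasureTheory

local notation "E" => EuclideanSpace ℝ (Fin n)

lemma linContinuous (f : E →ₗ[ℝ] ℝ) : Continuous f :=
  f.continuous_of_finiteDimensional

lemma volume_affineSubspace_ne_top (A : AffineSubspace ℝ E) (hA : A ≠ ⊤) :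
    volume (A : Set E) = 0 :=
  Measure.addHaar_affineSubspace volume A hA

lemma hyperplane_volume (f : E →ₗ[ℝ] ℝ) (hf : f ≠ 0) (c : ℝ) :
    volume {x : E | f x = c} = 0 := by
  obtain ⟨v, hv⟩ : ∃ v : E, f v ≠ 0 := by
    by_contra h
    push_neg at h
    exact hf (LinearMap.ext fun x => by simp [h x])
  set p : E := (c / f v) • v with hp
  have hpc : f p = c := by
    simp [hp, _root_.map_smul, div_mul_cancel₀ _ hv]
  have hset : {x : E | f x = c} = (AffineSubspace.mk' p (LinearMap.ker f) : Set E) := by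
    ext x
    simp only [AffineSubspace.mem_coe, AffineSubspace.mem_mk', mem_setOf_eq,
      LinearMap.mem_ker, vsub_eq_sub, map_sub, hpc]
    constructor
    · intro h; rw [h]; ring
    · intro h; linarith
  rw [hset]
  apply volume_affineSubspace_ne_top
  intro htop
  have : p + v ∈ AffineSubspace.mk' p (LinearMap.ker f) := htop ▸ AffineSubspace.mem_top ℝ E _
  rw [AffineSubspace.mem_mk'] at this
  simp only [vsub_eq_sub, add_sub_cancel_left, LinearMap.mem_ker] at this
  exact hv this

lemma volume_sUnion_zero {𝓢 : Set (Set E)} (hfin : 𝓢.Finite)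
    (h : ∀ S ∈ 𝓢, volume S = 0) : volume (⋃₀ 𝓢) = 0 :=
  (measure_sUnion_null_iff hfin.countable).2 h

lemma exists_avoid {B : Set E} (hB : IsOpen B) (hne : B.Nonempty)
    {𝓢 : Set (Set E)} (hfin : 𝓢.Finite) (h : ∀ S ∈ 𝓢, volume S = 0) :
    ∃ y ∈ B, y ∉ ⋃₀ 𝓢 := by
  by_contra hc
  push_neg at hc
  have hsub : B ⊆ ⋃₀ 𝓢 := fun y hy => hc y hy
  have : (0:ENNReal) < volume B := hB.measure_pos volume hne
  have hle : volume B ≤ volume (⋃₀ 𝓢) := measure_mono hsub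
  rw [volume_sUnion_zero hfin h] at hle
  exact absurd (le_antisymm hle zero_le) (by exact ne_of_gt this)

/-- If the whole segment `(y, x]` lies in `s`, then `y ∈ closure s`. -/
lemma mem_closure_of_segment {s : Set E} {x y : E}
    (h : ∀ t : ℝ, t ∈ Ioc (0:ℝ) 1 → y + t • (x - y) ∈ s) : y ∈ closure s := by
  rw [Metric.mem_closure_iff]
  intro ε hε
  set t : ℝ := min (1:ℝ) (ε / (‖x - y‖ + 1)) with ht
  have hxy : (0:ℝ) < ‖x - y‖ + 1 := by positivity
  have ht0 : 0 < t := lt_min one_pos (by positivity)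
  have ht1 : t ≤ 1 := min_le_left _ _
  refine ⟨y + t • (x - y), h t ⟨ht0, ht1⟩, ?_⟩
  rw [dist_comm]
  have : dist (y + t • (x - y)) y = t * ‖x - y‖ := by
    rw [dist_eq_norm]
    simp [norm_smul, abs_of_pos ht0]
  rw [this]
  calc t * ‖x - y‖ ≤ (ε / (‖x - y‖ + 1)) * ‖x - y‖ := by
        apply mul_le_mul_of_nonneg_right (min_le_right _ _) (norm_nonneg _)
    _ < ε := by
        rw [div_mul_eq_mul_div, div_lt_iff₀ hxy]
        nlinarith [norm_nonneg (x - y)]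

lemma exists_ne_zero {f : E →ₗ[ℝ] ℝ} (hf : f ≠ 0) : ∃ v : E, f v ≠ 0 := by
  by_contra h
  push_neg at h
  exact hf (LinearMap.ext fun x => by simp [h x])

lemma closure_biInter_halfspaces {ι : Type*} {s : Set ι} (hs : s.Finite)
    (g : ι → (E →ₗ[ℝ] ℝ) × ℝ) {x : E} (hx : ∀ i ∈ s, (g i).1 x < (g i).2) :
    closure (⋂ i ∈ s, {y : E | (g i).1 y < (g i).2}) = ⋂ i ∈ s, {y : E | (g i).1 y ≤ (g i).2} := by
  apply subset_antisymm
  · apply closure_minimal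
    · intro y hy
      simp only [mem_iInter, mem_setOf_eq] at hy ⊢
      exact fun i hi => le_of_lt (hy i hi)
    · exact isClosed_biInter fun i _ =>
        isClosed_le ((g i).1.continuous_of_finiteDimensional) continuous_const
  · intro y hy
    simp only [mem_iInter, mem_setOf_eq] at hy
    apply mem_closure_of_segment (x := x)
    intro t ht
    simp only [mem_iInter, mem_setOf_eq, map_add, _root_.map_smul, map_sub, smul_eq_mul]
    intro i hi
    have h1 := hy i hi
    have h2 := hx i hi
    nlinarith [ht.1, ht.2]

lemma hyperplane_eq_ratio {f g : E →ₗ[ℝ] ℝ} {c d : ℝ} (hf : f ≠ 0)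
    (h : {x : E | f x = c} = {x : E | g x = d}) (hg : g ≠ 0) :
    ∃ r : ℝ, r ≠ 0 ∧ (∀ x, f x = r * g x) ∧ c = r * d := by
  obtain ⟨v, hv⟩ := exists_ne_zero hg
  set r : ℝ := f v / g v with hr
  have key : ∀ x : E, f x = c + (g x - d) * r := by
    intro x
    have hw : g (x - ((g x - d) / g v) • v) = d := by
      simp only [map_sub, _root_.map_smul, smul_eq_mul]
      field_simp
      ring
    have : (x - ((g x - d) / g v) • v) ∈ {x : E | g x = d} := hw
    rw [← h] at this
    have hfw : f x - (g x - d) / g v * f v = c := by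
      simpa only [mem_setOf_eq, map_sub, _root_.map_smul, smul_eq_mul] using this
    rw [hr]
    field_simp at hfw ⊢
    linarith
  have h0 := key 0
  simp only [map_zero, zero_sub] at h0
  have hcd : c = r * d := by linarith [h0]
  refine ⟨r, ?_, fun x => by rw [key x, hcd]; ring, hcd⟩
  intro hr0
  apply hf
  apply LinearMap.ext
  intro x
  rw [LinearMap.zero_apply, key x, hr0, hcd, hr0]
  ring

lemma halfspace_of_hyperplane_eq {f g : E →ₗ[ℝ] ℝ} {c d : ℝ} (hf : f ≠ 0) (hg : g ≠ 0)
    (h : {x : E | f x = c} = {x : E | g x = d}) :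
    {x : E | f x ≤ c} = {x : E | g x ≤ d} ∨ {x : E | f x ≤ c} = {x : E | d ≤ g x} := by
  obtain ⟨r, hr0, hfg, hcd⟩ := hyperplane_eq_ratio hf h hg
  rcases lt_or_gt_of_ne hr0 with hneg | hpos
  · right
    ext x
    simp only [mem_setOf_eq, hfg x, hcd]
    constructor
    · intro hx; nlinarith
    · intro hx; nlinarith
  · left
    ext x
    simp only [mem_setOf_eq, hfg x, hcd]
    constructor
    · intro hx; nlinarith
    · intro hx; nlinarith

lemma finrank_ker_hyp {f : E →ₗ[ℝ] ℝ} (hf : f ≠ 0) :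
    Module.finrank ℝ (LinearMap.ker f) + 1 = n := by
  have h1 := LinearMap.finrank_range_add_finrank_ker f
  have hr : LinearMap.range f = ⊤ := by
    obtain ⟨v, hv⟩ := exists_ne_zero hf
    rw [LinearMap.range_eq_top]
    intro x
    exact ⟨(x / f v) • v, by simp [_root_.map_smul]; field_simp⟩
  rw [hr, finrank_top] at h1
  have h2 : Module.finrank ℝ ℝ = 1 := Module.finrank_self ℝ
  have h3 : Module.finrank ℝ (EuclideanSpace ℝ (Fin n)) = n := by
    simp [finrank_euclideanSpace]
  omega

/-- distinct hyperplanes through a common point have distinct kernels,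
and then the intersection of kernels has small rank -/
lemma ker_inf_lt {f g : E →ₗ[ℝ] ℝ} {c d : ℝ} (hf : f ≠ 0) (hg : g ≠ 0)
    (hne : {x : E | f x = c} ≠ {x : E | g x = d}) {p : E} (hp : f p = c) (hp' : g p = d) :
    LinearMap.ker f ⊓ LinearMap.ker g < LinearMap.ker f := by
  rcases lt_or_eq_of_le (inf_le_left (b := LinearMap.ker g)) with h | h
  · exact h
  · exfalso
    have hle : LinearMap.ker f ≤ LinearMap.ker g := by
      rw [← h]; exact inf_le_right
    have heq : LinearMap.ker f = LinearMap.ker g := by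
      apply Submodule.eq_of_le_of_finrank_eq hle
      have := finrank_ker_hyp hf
      have := finrank_ker_hyp hg
      omega
    apply hne
    ext x
    simp only [mem_setOf_eq]
    constructor
    · intro hx
      have : x - p ∈ LinearMap.ker f := by simp [LinearMap.mem_ker, map_sub, hx, hp]
      rw [heq] at this
      simp only [LinearMap.mem_ker, map_sub] at this
      linarith [hp'.symm ▸ this]
    · intro hx
      have : x - p ∈ LinearMap.ker g := by simp [LinearMap.mem_ker, map_sub, hx, hp']
      rw [← heq] at this
      simp only [LinearMap.mem_ker, map_sub] at this
      linarith

lemma span_insert_ne_top {f g : E →ₗ[ℝ] ℝ} {c d : ℝ} (hf : f ≠ 0) (hg : g ≠ 0)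
    (hne : {x : E | f x = c} ≠ {x : E | g x = d}) {p : E} (hp : f p = c) (hp' : g p = d) (a : E) :
    affineSpan ℝ (insert a ((AffineSubspace.mk' p (LinearMap.ker f ⊓ LinearMap.ker g) :
      AffineSubspace ℝ E) : Set E)) ≠ ⊤ := by
  intro htop
  have hpmem : p ∈ AffineSubspace.mk' p (LinearMap.ker f ⊓ LinearMap.ker g) :=
    AffineSubspace.self_mem_mk' _ _
  have hdir := AffineSubspace.direction_affineSpan_insert (k := ℝ) (p₂ := a) hpmem
  have hrank : Module.finrank ℝ
      (affineSpan ℝ (insert a ((AffineSubspace.mk' p (LinearMap.ker f ⊓ LinearMap.ker g) :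
        AffineSubspace ℝ E) : Set E))).direction < n := by
    rw [hdir, AffineSubspace.direction_mk']
    have h1 : Module.finrank ℝ ↥(Submodule.span ℝ ({a -ᵥ p} : Set E) ⊔
        (LinearMap.ker f ⊓ LinearMap.ker g)) ≤
        Module.finrank ℝ ↥(Submodule.span ℝ ({a -ᵥ p} : Set E)) +
        Module.finrank ℝ ↥(LinearMap.ker f ⊓ LinearMap.ker g) := by
      have := Submodule.finrank_sup_add_finrank_inf_eq
        (Submodule.span ℝ ({a -ᵥ p} : Set E)) (LinearMap.ker f ⊓ LinearMap.ker g)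
      omega
    have h2 : Module.finrank ℝ ↥(Submodule.span ℝ ({a -ᵥ p} : Set E)) ≤ 1 := by
      rcases eq_or_ne (a -ᵥ p) 0 with h | h
      · rw [h, Submodule.span_zero_singleton]; simp
      · rw [finrank_span_singleton h]
    have h3 : Module.finrank ℝ ↥(LinearMap.ker f ⊓ LinearMap.ker g) <
        Module.finrank ℝ ↥(LinearMap.ker f) :=
      Submodule.finrank_lt_finrank_of_lt (ker_inf_lt hf hg hne hp hp')
    have h4 := finrank_ker_hyp hf
    omega
  rw [htop] at hrank
  rw [AffineSubspace.direction_top] at hrank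
  simp only [finrank_top, finrank_euclideanSpace, Fintype.card_fin] at hrank
  omega


lemma exists_avoid'' {B : Set E} (hB : IsOpen B) (hne : B.Nonempty)
    {Z : Set E} (hZ : volume Z = 0) : ∃ y ∈ B, y ∉ Z := by
  by_contra hc
  push_neg at hc
  have hle : volume B ≤ volume Z := measure_mono fun y hy => hc y hy
  rw [hZ] at hle
  exact absurd (le_antisymm hle zero_le) (ne_of_gt (hB.measure_pos volume hne))

lemma no_separation {B : Set E} (hB : IsOpen B) (hBconv : Convex ℝ B)
    {𝓢 : Set (Set E)} (hfin : 𝓢.Finite)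
    (hA : ∀ S : ↥𝓢, ∃ A : AffineSubspace ℝ E, (S : Set E) ⊆ (A : Set E) ∧
        ∀ a : E, affineSpan ℝ (insert a (A : Set E)) ≠ ⊤)
    {u v : Set E} (hu : IsOpen u) (hv : IsOpen v) (huv : Disjoint u v)
    (hcov : B \ ⋃₀ 𝓢 ⊆ u ∪ v)
    (hu' : (B ∩ u).Nonempty) (hv' : (B ∩ v).Nonempty) : False := by
  haveI : Finite ↥𝓢 := hfin.to_subtype
  haveI : Countable ↥𝓢 := Finite.to_countable
  choose A hAsub hAtop using hA
  have hspan0 : ∀ (a : E) (S : ↥𝓢),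
      volume ((affineSpan ℝ (insert a ((A S : AffineSubspace ℝ E) : Set E)) :
        AffineSubspace ℝ E) : Set E) = 0 := fun a S =>
    Measure.addHaar_affineSubspace volume _ (hAtop S a)
  -- the union of the S's is null
  have hZ : volume (⋃₀ 𝓢) = 0 := by
    rw [sUnion_eq_iUnion]
    apply measure_iUnion_null
    intro S
    apply measure_mono_null (hAsub S)
    apply Measure.addHaar_affineSubspace
    intro htop
    apply hAtop S 0
    rw [htop, AffineSubspace.top_coe, insert_eq_of_mem (mem_univ _)]
    exact AffineSubspace.span_univ ℝ _ _
  -- pick endpoints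
  obtain ⟨a, haBu, haZ⟩ := exists_avoid'' (hB.inter hu) hu' hZ
  obtain ⟨b, hbBv, hbZ⟩ := exists_avoid'' (hB.inter hv) hv' hZ
  -- pick the middle point avoiding all the bad affine subspaces
  set Bad : Set E := (⋃ S : ↥𝓢, ((affineSpan ℝ (insert a ((A S : AffineSubspace ℝ E) : Set E)) :
        AffineSubspace ℝ E) : Set E)) ∪
      (⋃ S : ↥𝓢, ((affineSpan ℝ (insert b ((A S : AffineSubspace ℝ E) : Set E)) :
        AffineSubspace ℝ E) : Set E)) with hBadDef
  have hBad : volume Bad = 0 := by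
    rw [hBadDef]
    apply measure_union_null <;>
      exact measure_iUnion_null fun S => hspan0 _ S
  obtain ⟨z, hzB, hzBad⟩ := exists_avoid'' hB ⟨a, haBu.1⟩ hBad
  -- segments avoid every S
  have key : ∀ c : E, c ∉ ⋃₀ 𝓢 →
      (∀ S : ↥𝓢, z ∉ ((affineSpan ℝ (insert c ((A S : AffineSubspace ℝ E) : Set E)) :
        AffineSubspace ℝ E) : Set E)) →
      ∀ w ∈ segment ℝ c z, w ∉ ⋃₀ 𝓢 := by
    intro c hcZ hcBad w hw hwZ
    obtain ⟨S, hS, hwS⟩ := hwZ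
    obtain ⟨s', t, hs', ht, hst, hw'⟩ := hw
    rcases eq_or_lt_of_le ht with ht0 | htpos
    · have : w = c := by
        rw [← hw', ← ht0]
        simp
        have : s' = 1 := by linarith
        rw [this, one_smul]
      exact hcZ (this ▸ ⟨S, hS, hwS⟩)
    · apply hcBad ⟨S, hS⟩
      have hcmem : c ∈ affineSpan ℝ (insert c ((A ⟨S, hS⟩ : AffineSubspace ℝ E) : Set E)) :=
        subset_affineSpan ℝ _ (mem_insert _ _)
      have hwmem : w ∈ affineSpan ℝ (insert c ((A ⟨S, hS⟩ : AffineSubspace ℝ E) : Set E)) :=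
        subset_affineSpan ℝ _ (mem_insert_of_mem _ (hAsub ⟨S, hS⟩ hwS))
      have hz : z = t⁻¹ • (w -ᵥ c) +ᵥ c := by
        have : w - c = t • (z - c) := by
          rw [← hw']
          have : s' = 1 - t := by linarith
          rw [this]
          module
        simp only [vsub_eq_sub, vadd_eq_add, this, smul_smul,
          inv_mul_cancel₀ (ne_of_gt htpos), one_smul]
        abel
      rw [hz]
      exact AffineSubspace.smul_vsub_vadd_mem _ t⁻¹ hwmem hcmem hcmem
  have hseg1 : ∀ w ∈ segment ℝ a z, w ∉ ⋃₀ 𝓢 := by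
    apply key a haZ
    intro S hS
    exact hzBad (Or.inl (mem_iUnion.mpr ⟨S, hS⟩))
  have hseg2 : ∀ w ∈ segment ℝ b z, w ∉ ⋃₀ 𝓢 := by
    apply key b hbZ
    intro S hS
    exact hzBad (Or.inr (mem_iUnion.mpr ⟨S, hS⟩))
  -- the connected set
  set T : Set E := segment ℝ a z ∪ segment ℝ z b with hTdef
  have hTB : T ⊆ B := union_subset (hBconv.segment_subset haBu.1 hzB)
    (hBconv.segment_subset hzB hbBv.1)
  have hTZ : ∀ w ∈ T, w ∉ ⋃₀ 𝓢 := by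
    rintro w (hw | hw)
    · exact hseg1 w hw
    · exact hseg2 w (segment_symm ℝ z b ▸ hw)
  have hT : IsPreconnected T :=
    IsPreconnected.union z (right_mem_segment ℝ a z) (left_mem_segment ℝ z b)
      (convex_segment a z).isPreconnected (convex_segment z b).isPreconnected
  have hTuv : T ⊆ u ∪ v := fun w hw => hcov ⟨hTB hw, hTZ w hw⟩
  obtain ⟨w, hwT, hwu, hwv⟩ := hT u v hu hv hTuv
    ⟨a, Or.inl (left_mem_segment ℝ a z), haBu.2⟩
    ⟨b, Or.inr (right_mem_segment ℝ z b), hbBv.2⟩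
  exact huv.ne_of_mem hwu hwv rfl

lemma not_open_subset_null {O Z : Set E} (hO : IsOpen O) (hne : O.Nonempty)
    (hZ : volume Z = 0) (hsub : O ⊆ Z) : False := by
  have h1 : volume O ≤ volume Z := measure_mono hsub
  rw [hZ] at h1
  exact absurd (le_antisymm h1 zero_le) (ne_of_gt (hO.measure_pos volume hne))

lemma closed_convex_eq_closure_interior {s : Set E} (hconv : Convex ℝ s)
    (hclosed : IsClosed s) (hne : (interior s).Nonempty) : s = closure (interior s) := by
  apply subset_antisymm
  · intro y hy
    obtain ⟨x, hx⟩ := hne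
    apply mem_closure_of_segment (x := x)
    intro t ht
    exact hconv.add_smul_sub_mem_interior hy hx ht
  · exact closure_minimal interior_subset hclosed

lemma option_union {L R T1 T2 : Set E} (hLR : L ∪ R = univ)
    (h1 : T1 = ∅ ∨ T1 = L ∨ T1 = R ∨ T1 = univ)
    (h2 : T2 = ∅ ∨ T2 = L ∨ T2 = R ∨ T2 = univ) :
    T1 ∪ T2 = ∅ ∨ T1 ∪ T2 = L ∨ T1 ∪ T2 = R ∨ T1 ∪ T2 = univ := by
  have hRL : R ∪ L = univ := by rw [union_comm]; exact hLR
  rcases h1 with rfl | rfl | rfl | rfl <;> rcases h2 with rfl | rfl | rfl | rfl <;>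
    simp [hLR, hRL]

lemma sUnion_local {𝓒 : Set (Set E)} (hfin : 𝓒.Finite) {y : E} {L R : Set E}
    (hLR : L ∪ R = univ)
    (h : ∀ C ∈ 𝓒, ∃ V T, IsOpen V ∧ y ∈ V ∧ (T = ∅ ∨ T = L ∨ T = R ∨ T = univ) ∧
      C ∩ V = T ∩ V) :
    ∃ U T, IsOpen U ∧ y ∈ U ∧ (T = ∅ ∨ T = L ∨ T = R ∨ T = univ) ∧
      (⋃₀ 𝓒) ∩ U = T ∩ U := by
  revert h
  refine Set.Finite.induction_on 𝓒 hfin ?_ ?_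
  · exact fun _ => ⟨univ, ∅, isOpen_univ, mem_univ y, Or.inl rfl, by simp⟩
  · intro C 𝓖 hC h𝓖 ih h
    obtain ⟨U, T, hU, hyU, hT, hUeq⟩ := ih fun C' hC' => h C' (mem_insert_of_mem _ hC')
    obtain ⟨V, T', hV, hyV, hT', hVeq⟩ := h C (mem_insert _ _)
    refine ⟨U ∩ V, T' ∪ T, hU.inter hV, ⟨hyU, hyV⟩, option_union hLR hT' hT, ?_⟩
    rw [sUnion_insert]
    rw [union_inter_distrib_right, union_inter_distrib_right]
    congr 1
    · calc C ∩ (U ∩ V) = (C ∩ V) ∩ U := by rw [inter_comm U V, ← inter_assoc]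
        _ = (T' ∩ V) ∩ U := by rw [hVeq]
        _ = T' ∩ (U ∩ V) := by rw [inter_comm U V, inter_assoc]
    · calc ⋃₀ 𝓖 ∩ (U ∩ V) = (⋃₀ 𝓖 ∩ U) ∩ V := by rw [← inter_assoc]
        _ = (T ∩ U) ∩ V := by rw [hUeq]
        _ = T ∩ (U ∩ V) := by rw [inter_assoc]

lemma polytope_local {C : Set E} (hcomp : IsCompact C) (hint : (interior C).Nonempty)
    {s : Finset ((EuclideanSpace ℝ (Fin n) →ₗ[ℝ] ℝ) × ℝ)}
    (hC : C = ⋂ p ∈ s, {x : E | p.1 x ≤ p.2})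
    {f₀ : E →ₗ[ℝ] ℝ} {c₀ : ℝ} (hf₀ : f₀ ≠ 0)
    {y : E} {B' : Set E} (hB' : IsOpen B') (hyB' : y ∈ B')
    (havoid : ∀ p ∈ s, p.1 ≠ 0 → ({x : E | p.1 x = p.2} ∩ B').Nonempty →
      {x : E | p.1 x = p.2} = {x : E | f₀ x = c₀}) :
    ∃ V T, IsOpen V ∧ y ∈ V ∧
      (T = ∅ ∨ T = {x : E | f₀ x ≤ c₀} ∨ T = {x : E | c₀ ≤ f₀ x} ∨ T = univ) ∧
      C ∩ V = T ∩ V := by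
  classical
  by_cases hyC : y ∈ C
  case neg =>
    exact ⟨Cᶜ, ∅, hcomp.isClosed.isOpen_compl, hyC, Or.inl rfl, by simp⟩
  -- y ∈ C
  set act : Finset ((EuclideanSpace ℝ (Fin n) →ₗ[ℝ] ℝ) × ℝ) :=
    s.filter (fun p => p.1 ≠ 0 ∧ p.1 y = p.2) with hact
  set inact : Finset ((EuclideanSpace ℝ (Fin n) →ₗ[ℝ] ℝ) × ℝ) :=
    s.filter (fun p => p.1 y < p.2) with hinact
  set V : Set E := B' ∩ ⋂ p ∈ inact, {x : E | p.1 x < p.2} with hV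
  have hyCs : ∀ p ∈ s, p.1 y ≤ p.2 := by
    intro p hp
    have := hC ▸ hyC
    simp only [mem_iInter, mem_setOf_eq] at this
    exact this p hp
  have hVopen : IsOpen V := by
    apply hB'.inter
    apply isOpen_biInter_finset
    intro p _
    exact isOpen_lt (p.1.continuous_of_finiteDimensional) continuous_const
  have hyV : y ∈ V := by
    refine ⟨hyB', ?_⟩
    simp only [mem_iInter, mem_setOf_eq]
    intro p hp
    exact (Finset.mem_filter.mp hp).2
  -- C ∩ V is cut out by active constraints
  have hCV : C ∩ V = (⋂ p ∈ act, {x : E | p.1 x ≤ p.2}) ∩ V := by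
    apply subset_antisymm
    · intro z hz
      refine ⟨?_, hz.2⟩
      simp only [mem_iInter, mem_setOf_eq]
      intro p hp
      have := hC ▸ hz.1
      simp only [mem_iInter, mem_setOf_eq] at this
      exact this p (Finset.mem_filter.mp hp).1
    · rintro z ⟨hz1, hz2⟩
      refine ⟨?_, hz2⟩
      rw [hC]
      simp only [mem_iInter, mem_setOf_eq]
      intro p hp
      by_cases hp0 : p.1 = 0
      · have h2 : (0:ℝ) ≤ p.2 := by
          have := hyCs p hp
          rwa [hp0, LinearMap.zero_apply] at this
        rw [hp0, LinearMap.zero_apply]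
        exact h2
      by_cases hpy : p.1 y = p.2
      · have hpact : p ∈ act := Finset.mem_filter.mpr ⟨hp, hp0, hpy⟩
        simp only [mem_iInter, mem_setOf_eq] at hz1
        exact hz1 p hpact
      · have hlt : p.1 y < p.2 := lt_of_le_of_ne (hyCs p hp) hpy
        have hpin : p ∈ inact := Finset.mem_filter.mpr ⟨hp, hlt⟩
        have := hz2.2
        simp only [mem_iInter, mem_setOf_eq] at this
        exact le_of_lt (this p hpin)
  -- each active constraint is a halfspace of the fixed hyperplane
  have hactH : ∀ p ∈ act, {x : E | p.1 x ≤ p.2} = {x : E | f₀ x ≤ c₀} ∨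
      {x : E | p.1 x ≤ p.2} = {x : E | c₀ ≤ f₀ x} := by
    intro p hp
    obtain ⟨hps, hp0, hpy⟩ := Finset.mem_filter.mp hp
    have heq : {x : E | p.1 x = p.2} = {x : E | f₀ x = c₀} :=
      havoid p hps hp0 ⟨y, hpy, hyB'⟩
    exact halfspace_of_hyperplane_eq hp0 hf₀ heq
  rcases Finset.eq_empty_or_nonempty act with hacte | hactne
  · refine ⟨V, univ, hVopen, hyV, Or.inr (Or.inr (Or.inr rfl)), ?_⟩
    rw [hCV, hacte]
    simp
  by_cases hL : ∃ p ∈ act, {x : E | p.1 x ≤ p.2} = {x : E | f₀ x ≤ c₀}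
  · by_cases hR : ∃ p ∈ act, {x : E | p.1 x ≤ p.2} = {x : E | c₀ ≤ f₀ x}
    · -- mixed: contradiction
      exfalso
      obtain ⟨p, hp, hpeq⟩ := hL
      obtain ⟨q, hq, hqeq⟩ := hR
      have hsub : C ∩ V ⊆ {x : E | f₀ x = c₀} := by
        intro z hz
        rw [hCV] at hz
        simp only [mem_inter_iff, mem_iInter, mem_setOf_eq] at hz
        have h1 : z ∈ {x : E | p.1 x ≤ p.2} := hz.1 p hp
        have h2 : z ∈ {x : E | q.1 x ≤ q.2} := hz.1 q hq
        rw [hpeq] at h1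
        rw [hqeq] at h2
        exact le_antisymm h1 h2
      -- but C ∩ V contains a nonempty open set
      have hyci : y ∈ closure (interior C) := by
        rw [← closed_convex_eq_closure_interior ?_ hcomp.isClosed hint]
        · exact hyC
        · rw [hC]
          apply convex_iInter₂
          intro p _
          exact convex_halfSpace_le (LinearMap.isLinear _) _
      have hne : (interior C ∩ V).Nonempty := by
        rw [_root_.mem_closure_iff] at hyci
        rw [inter_comm]
        exact hyci V hVopen hyV
      apply not_open_subset_null (isOpen_interior.inter hVopen) hne
        (hyperplane_volume f₀ hf₀ c₀)
      intro z hz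
      exact hsub ⟨interior_subset hz.1, hz.2⟩
    · -- all left
      push_neg at hR
      refine ⟨V, {x : E | f₀ x ≤ c₀}, hVopen, hyV, Or.inr (Or.inl rfl), ?_⟩
      rw [hCV]
      congr 1
      apply subset_antisymm
      · obtain ⟨p, hp, hpeq⟩ := hL
        intro z hz
        simp only [mem_iInter, mem_setOf_eq] at hz
        exact hpeq ▸ (hz p hp)
      · intro z hz
        simp only [mem_iInter, mem_setOf_eq]
        intro p hp
        rcases hactH p hp with h | h
        · show z ∈ {x : E | p.1 x ≤ p.2}
          rw [h]; exact hz
        · exact absurd h (hR p hp)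
  · -- all right
    push_neg at hL
    refine ⟨V, {x : E | c₀ ≤ f₀ x}, hVopen, hyV, Or.inr (Or.inr (Or.inl rfl)), ?_⟩
    rw [hCV]
    congr 1
    apply subset_antisymm
    · obtain ⟨p, hp⟩ := hactne
      intro z hz
      simp only [mem_iInter, mem_setOf_eq] at hz
      rcases hactH p hp with h | h
      · exact absurd h (hL p hp)
      · exact h ▸ (hz p hp)
    · intro z hz
      simp only [mem_iInter, mem_setOf_eq]
      intro p hp
      rcases hactH p hp with h | h
      · exact absurd h (hL p hp)
      · show z ∈ {x : E | p.1 x ≤ p.2}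
        rw [h]; exact hz

lemma forward {W : Set E} (h : IsPolytopal W) :
    ∃ 𝓒 : Set (Set E), 𝓒.Finite ∧ (∀ C ∈ 𝓒, IsConvexPolytope C) ∧ W = ⋃₀ 𝓒 := by
  classical
  obtain ⟨hcomp, hclos, 𝓗, hfin, hsupp, hcover⟩ := h
  have hWclosed : IsClosed W := hcomp.isClosed
  have hfc : ∀ H : Set E, ∃ fc : (E →ₗ[ℝ] ℝ) × ℝ, H ∈ 𝓗 →
      fc.1 ≠ 0 ∧ H = {x | fc.1 x = fc.2} := by
    intro H
    by_cases hH : H ∈ 𝓗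
    · obtain ⟨f, c, hf0, hHeq, -⟩ := hsupp H hH
      exact ⟨(f, c), fun _ => ⟨hf0, hHeq⟩⟩
    · exact ⟨(0, 0), fun hh => absurd hh hH⟩
  choose fc hfc using hfc
  set pr : Set E → Bool → (E →ₗ[ℝ] ℝ) × ℝ := fun H b =>
    if b then fc H else (-(fc H).1, -(fc H).2) with hpr
  set sgn : E → Set E → Bool := fun x H => decide ((fc H).1 x < (fc H).2) with hsgn
  set D : E → Set E := fun x => ⋂ H ∈ 𝓗, {y | (pr H (sgn x H)).1 y < (pr H (sgn x H)).2}
    with hD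
  set Cc : E → Set E := fun x => ⋂ H ∈ 𝓗, {y | (pr H (sgn x H)).1 y ≤ (pr H (sgn x H)).2}
    with hCc
  set S : Set E := interior W \ ⋃₀ 𝓗 with hSdef
  -- basic membership facts
  have hxq : ∀ x ∈ S, ∀ H ∈ 𝓗, (pr H (sgn x H)).1 x < (pr H (sgn x H)).2 := by
    intro x hx H hH
    have hxH : x ∉ H := fun hmem => hx.2 ⟨H, hH, hmem⟩
    rcases lt_trichotomy ((fc H).1 x) ((fc H).2) with hlt | heq | hgt
    · simp [hpr, hsgn, hlt]
    · exact absurd (((hfc H hH).2) ▸ heq : x ∈ H) hxH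
    · simp [hpr, hsgn, not_lt_of_gt hgt, LinearMap.neg_apply, hgt]
  have hxD : ∀ x ∈ S, x ∈ D x := by
    intro x hx
    simp only [hD, mem_iInter, mem_setOf_eq]
    exact fun H hH => hxq x hx H hH
  have hDopen : ∀ x, IsOpen (D x) := by
    intro x
    exact hfin.isOpen_biInter fun H _ =>
      isOpen_lt ((pr H (sgn x H)).1.continuous_of_finiteDimensional) continuous_const
  have hCclosed : ∀ x, IsClosed (Cc x) := by
    intro x
    exact isClosed_biInter fun H _ =>
      isClosed_le ((pr H (sgn x H)).1.continuous_of_finiteDimensional) continuous_const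
  have hDC : ∀ x, D x ⊆ Cc x := by
    intro x y hy
    simp only [hD, hCc, mem_iInter, mem_setOf_eq] at hy ⊢
    exact fun H hH => le_of_lt (hy H hH)
  have hcloseDC : ∀ x ∈ S, closure (D x) = Cc x := by
    intro x hx
    exact closure_biInter_halfspaces hfin (fun H => pr H (sgn x H)) (hxq x hx)
  -- each open cell avoids all the hyperplanes
  have hDavoid : ∀ x, ∀ y ∈ D x, y ∉ ⋃₀ 𝓗 := by
    intro x y hy ⟨H, hH, hyH⟩
    simp only [hD, mem_iInter, mem_setOf_eq] at hy
    have h1 := hy H hH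
    have h2 : (fc H).1 y = (fc H).2 := by
      have := (hfc H hH).2
      rw [this] at hyH
      exact hyH
    rcases Bool.eq_false_or_eq_true (sgn x H) with hb | hb <;>
      simp [hpr, hb, LinearMap.neg_apply, h2] at h1
  -- each open cell meeting the interior is inside W
  have hDW : ∀ x ∈ S, D x ⊆ interior W := by
    intro x hx
    have hconv : Convex ℝ (D x) := by
      apply convex_iInter₂
      intro H _
      exact convex_halfSpace_lt (LinearMap.isLinear _) _
    apply hconv.isPreconnected.subset_left_of_subset_union isOpen_interior
      hWclosed.isOpen_compl (disjoint_compl_right.mono_left interior_subset)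
    · intro y hy
      by_cases hyW : y ∈ W
      · left
        have : y ∉ frontier W := fun hfr => hDavoid x y hy (hcover hfr)
        rw [hWclosed.frontier_eq] at this
        simp only [mem_diff, not_and, not_not] at this
        exact this hyW
      · right; exact hyW
    · exact ⟨x, hxD x hx, hx.1⟩
  -- define the collection
  set 𝓒 : Set (Set E) := Cc '' S with h𝓒
  have h𝓒fin : 𝓒.Finite := by
    haveI : Finite ↥𝓗 := hfin.to_subtype
    apply Set.Finite.subset (Set.finite_range
      (fun b : ↥𝓗 → Bool => ⋂ H : ↥𝓗, {y : E | (pr ↑H (b H)).1 y ≤ (pr ↑H (b H)).2}))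
    rintro _ ⟨x, -, rfl⟩
    refine ⟨fun H => sgn x ↑H, ?_⟩
    rw [hCc]
    ext y
    simp only [mem_iInter, mem_setOf_eq]
    constructor
    · intro hy H hH; exact hy ⟨H, hH⟩
    · intro hy H; exact hy ↑H H.2
  refine ⟨𝓒, h𝓒fin, ?_, ?_⟩
  · -- each is a convex polytope
    rintro _ ⟨x, hx, rfl⟩
    have hsubW : Cc x ⊆ W := by
      rw [← hcloseDC x hx]
      calc closure (D x) ⊆ closure W := closure_mono ((hDW x hx).trans interior_subset)
        _ = W := hWclosed.closure_eq
    refine ⟨hcomp.of_isClosed_subset (hCclosed x) hsubW, ?_, ?_⟩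
    · exact ⟨x, interior_maximal (hDC x) (hDopen x) (hxD x hx)⟩
    · refine ⟨hfin.toFinset.image (fun H => pr H (sgn x H)), ?_⟩
      rw [hCc]
      ext y
      simp only [mem_iInter, mem_setOf_eq, Finset.mem_image, hfin.mem_toFinset]
      constructor
      · rintro hy p ⟨H, hH, rfl⟩
        exact hy H hH
      · intro hy H hH
        exact hy _ ⟨H, hH, rfl⟩
  · -- W is the union
    apply subset_antisymm
    · -- W ⊆ ⋃₀ 𝓒
      have hSsub : S ⊆ ⋃₀ 𝓒 := by
        intro x hx
        exact ⟨Cc x, ⟨x, hx, rfl⟩, hDC x (hxD x hx)⟩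
      have hclosedU : IsClosed (⋃₀ 𝓒) := by
        rw [sUnion_eq_biUnion]
        exact h𝓒fin.isClosed_biUnion (by rintro _ ⟨x, hx, rfl⟩; exact hCclosed x)
      have hint : interior W ⊆ closure S := by
        intro z hz
        rw [Metric.mem_closure_iff]
        intro ε hε
        have hopen : IsOpen (Metric.ball z ε ∩ interior W) :=
          Metric.isOpen_ball.inter isOpen_interior
        have hne : (Metric.ball z ε ∩ interior W).Nonempty :=
          ⟨z, Metric.mem_ball_self hε, hz⟩
        have hnull : ∀ H ∈ 𝓗, volume H = 0 := by
          intro H hH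
          rw [(hfc H hH).2]
          exact hyperplane_volume _ (hfc H hH).1 _
        obtain ⟨y, hy, hyH⟩ := exists_avoid hopen hne hfin hnull
        exact ⟨y, ⟨hy.2, hyH⟩, (by rw [dist_comm]; exact Metric.mem_ball.mp hy.1)⟩
      calc W = closure (interior W) := hclos
        _ ⊆ closure (closure S) := closure_mono hint
        _ = closure S := closure_closure
        _ ⊆ closure (⋃₀ 𝓒) := closure_mono hSsub
        _ = ⋃₀ 𝓒 := hclosedU.closure_eq
    · -- ⋃₀ 𝓒 ⊆ W
      rintro y ⟨_, ⟨x, hx, rfl⟩, hy⟩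
      have : Cc x ⊆ W := by
        rw [← hcloseDC x hx]
        calc closure (D x) ⊆ closure W := closure_mono ((hDW x hx).trans interior_subset)
          _ = W := hWclosed.closure_eq
      exact this hy

lemma reverse {W : Set E} {𝓒 : Set (Set E)} (h𝓒fin : 𝓒.Finite)
    (h𝓒poly : ∀ C ∈ 𝓒, IsConvexPolytope C) (hWeq : W = ⋃₀ 𝓒) : IsPolytopal W := by
  classical
  -- choose the halfspace presentations
  have hsC' : ∀ C : Set E, ∃ s : Finset ((E →ₗ[ℝ] ℝ) × ℝ), C ∈ 𝓒 →
      C = ⋂ p ∈ s, {x : E | p.1 x ≤ p.2} := by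
    intro C
    by_cases hC : C ∈ 𝓒
    · obtain ⟨-, -, s, hs⟩ := h𝓒poly C hC
      exact ⟨s, fun _ => hs⟩
    · exact ⟨∅, fun h => absurd h hC⟩
  choose sC hsC using hsC'
  have hWcomp : IsCompact W := by
    rw [hWeq]
    exact h𝓒fin.isCompact_sUnion fun C hC => (h𝓒poly C hC).1
  have hWclosed : IsClosed W := hWcomp.isClosed
  have hCsub : ∀ C ∈ 𝓒, C ⊆ W := by
    intro C hC
    rw [hWeq]
    exact subset_sUnion_of_mem hC
  have hCconv : ∀ C ∈ 𝓒, Convex ℝ C := by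
    intro C hC
    rw [hsC C hC]
    exact convex_iInter₂ fun p _ => convex_halfSpace_le (LinearMap.isLinear _) _
  have hWclos : W = closure (interior W) := by
    apply subset_antisymm
    · intro z hz
      rw [hWeq] at hz
      obtain ⟨C, hC, hzC⟩ := hz
      have h1 : z ∈ closure (interior C) := by
        rw [← closed_convex_eq_closure_interior (hCconv C hC) (h𝓒poly C hC).1.isClosed
          (h𝓒poly C hC).2.1]
        exact hzC
      exact closure_mono (interior_mono (hCsub C hC)) h1
    · exact closure_minimal interior_subset hWclosed
  -- the raw collection of hyperplanes
  set Raw : Set (Set E) := {H | ∃ C ∈ 𝓒, ∃ p ∈ sC C, p.1 ≠ 0 ∧ H = {x : E | p.1 x = p.2}}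
    with hRawdef
  have hRawfin : Raw.Finite := by
    apply Set.Finite.subset (Set.Finite.biUnion h𝓒fin
      (fun C _ => ((sC C).finite_toSet.image (fun p => {x : E | p.1 x = p.2}))))
    rintro H ⟨C, hC, p, hp, -, rfl⟩
    exact mem_biUnion hC ⟨p, hp, rfl⟩
  have hRawprop : ∀ H : Set E, ∃ fc : (E →ₗ[ℝ] ℝ) × ℝ, H ∈ Raw →
      fc.1 ≠ 0 ∧ H = {x : E | fc.1 x = fc.2} := by
    intro H
    by_cases hH : H ∈ Raw
    · obtain ⟨C, hC, p, hp, hp0, hHeq⟩ := hH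
      exact ⟨p, fun _ => ⟨hp0, hHeq⟩⟩
    · exact ⟨(0, 0), fun h => absurd h hH⟩
  choose fcR hfcR using hRawprop
  have hRawclosed : ∀ H ∈ Raw, IsClosed H := by
    intro H hH
    rw [(hfcR H hH).2]
    exact isClosed_eq ((fcR H).1.continuous_of_finiteDimensional) continuous_const
  -- frontier is covered by the raw hyperplanes
  have hfrontier : frontier W ⊆ ⋃₀ Raw := by
    intro z hz
    have hzW : z ∈ W := hWclosed.closure_eq ▸ hz.1
    have hzint : z ∉ interior W := hz.2
    rw [hWeq] at hzW
    obtain ⟨C, hC, hzC⟩ := hzW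
    have hzintC : z ∉ interior C := fun h => hzint (interior_mono (hCsub C hC) h)
    -- there must be an active nonzero constraint at z
    by_contra hcon
    apply hzintC
    have hzs : ∀ p ∈ sC C, p.1 z ≤ p.2 := by
      intro p hp
      have := (hsC C hC) ▸ hzC
      simp only [mem_iInter, mem_setOf_eq] at this
      exact this p hp
    have hstrict : ∀ p ∈ sC C, p.1 ≠ 0 → p.1 z < p.2 := by
      intro p hp hp0
      rcases lt_or_eq_of_le (hzs p hp) with h | h
      · exact h
      · exfalso
        exact hcon ⟨{x : E | p.1 x = p.2}, ⟨C, hC, p, hp, hp0, rfl⟩, h⟩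
    have hopen : IsOpen (⋂ p ∈ (sC C).filter (fun p => p.1 ≠ 0), {x : E | p.1 x < p.2}) :=
      isOpen_biInter_finset fun p _ =>
        isOpen_lt (p.1.continuous_of_finiteDimensional) continuous_const
    apply mem_interior.mpr
    refine ⟨_, ?_, hopen, ?_⟩
    · intro w hw
      rw [hsC C hC]
      simp only [mem_iInter, mem_setOf_eq] at hw ⊢
      intro p hp
      by_cases hp0 : p.1 = 0
      · rw [hp0, LinearMap.zero_apply]
        have := hzs p hp
        rwa [hp0, LinearMap.zero_apply] at this
      · exact le_of_lt (hw p (Finset.mem_filter.mpr ⟨hp, hp0⟩))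
    · simp only [mem_iInter, mem_setOf_eq]
      intro p hp
      obtain ⟨hps, hp0⟩ := Finset.mem_filter.mp hp
      exact hstrict p hps hp0
  -- key step : every frontier point lies on a properly supporting raw hyperplane
  have key : ∀ x ∈ frontier W, ∃ H₀ ∈ Raw, x ∈ H₀ ∧ ProperlySupporting W H₀ := by
    intro x hx
    set 𝓚 : Set (Set E) := {H ∈ Raw | x ∈ H} with h𝓚def
    have h𝓚sub : 𝓚 ⊆ Raw := sep_subset _ _
    have h𝓚fin : 𝓚.Finite := hRawfin.subset h𝓚sub
    have hO : IsOpen (⋂ H ∈ Raw \ 𝓚, Hᶜ) :=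
      (hRawfin.subset diff_subset).isOpen_biInter
        (fun H hH => (hRawclosed H hH.1).isOpen_compl)
    have hxO : x ∈ ⋂ H ∈ Raw \ 𝓚, Hᶜ := by
      simp only [mem_iInter, mem_compl_iff]
      intro H hH hxH
      exact hH.2 ⟨hH.1, hxH⟩
    obtain ⟨δ, hδpos, hball⟩ := Metric.isOpen_iff.mp hO x hxO
    set B : Set E := Metric.ball x δ with hBdef
    have hBopen : IsOpen B := Metric.isOpen_ball
    have hxB : x ∈ B := Metric.mem_ball_self hδpos
    have hBRaw : ∀ H ∈ Raw, H ∉ 𝓚 → H ∩ B = ∅ := by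
      intro H hH hH𝓚
      apply eq_empty_iff_forall_notMem.mpr
      rintro z ⟨hzH, hzB⟩
      have := hball hzB
      simp only [mem_iInter, mem_compl_iff] at this
      exact this H ⟨hH, hH𝓚⟩ hzH
    -- find a clean frontier point in B
    have hclean : ∃ y H₀, y ∈ B ∧ y ∈ frontier W ∧ H₀ ∈ 𝓚 ∧ y ∈ H₀ ∧
        ∀ H ∈ Raw, y ∈ H → H = H₀ := by
      by_contra hcon
      push_neg at hcon
      set 𝓟 : Set (Set E) :=
        {S | ∃ H₁ ∈ 𝓚, ∃ H₂ ∈ 𝓚, H₁ ≠ H₂ ∧ S = H₁ ∩ H₂ ∧ S.Nonempty} with h𝓟def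
      have h𝓟fin : 𝓟.Finite := by
        apply Set.Finite.subset (Set.Finite.image2 (fun a b => a ∩ b) h𝓚fin h𝓚fin)
        rintro S ⟨H₁, h₁, H₂, h₂, -, rfl, -⟩
        exact mem_image2_of_mem h₁ h₂
      have hcov𝓟 : ∀ y ∈ frontier W ∩ B, y ∈ ⋃₀ 𝓟 := by
        rintro y ⟨hyfr, hyB⟩
        obtain ⟨H₁, hH₁Raw, hyH₁⟩ := hfrontier hyfr
        have hH₁𝓚 : H₁ ∈ 𝓚 := by
          by_contra h
          exact (eq_empty_iff_forall_notMem.mp (hBRaw H₁ hH₁Raw h) y) ⟨hyH₁, hyB⟩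
        obtain ⟨H₂, hH₂Raw, hyH₂, hH₂ne⟩ := hcon y H₁ hyB hyfr hH₁𝓚 hyH₁
        have hH₂𝓚 : H₂ ∈ 𝓚 := by
          by_contra h
          exact (eq_empty_iff_forall_notMem.mp (hBRaw H₂ hH₂Raw h) y) ⟨hyH₂, hyB⟩
        exact ⟨H₁ ∩ H₂, ⟨H₁, hH₁𝓚, H₂, hH₂𝓚, Ne.symm hH₂ne, rfl,
          ⟨y, hyH₁, hyH₂⟩⟩, hyH₁, hyH₂⟩
      -- a contradiction via connectivity
      apply no_separation hBopen (convex_ball x δ) h𝓟fin ?_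
        isOpen_interior hWclosed.isOpen_compl
        (disjoint_compl_right.mono_left interior_subset) ?_ ?_ ?_
      · -- the affine subspaces
        rintro ⟨S, H₁, h₁, H₂, h₂, hne, rfl, hSne⟩
        obtain ⟨hf₁, hH₁eq⟩ := hfcR H₁ (h𝓚sub h₁)
        obtain ⟨hf₂, hH₂eq⟩ := hfcR H₂ (h𝓚sub h₂)
        obtain ⟨p, hp₁, hp₂⟩ := hSne
        have hp₁' : (fcR H₁).1 p = (fcR H₁).2 := by
          have := hH₁eq ▸ hp₁; exact this
        have hp₂' : (fcR H₂).1 p = (fcR H₂).2 := by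
          have := hH₂eq ▸ hp₂; exact this
        have hneq : {x : E | (fcR H₁).1 x = (fcR H₁).2} ≠ {x : E | (fcR H₂).1 x = (fcR H₂).2} := by
          rw [← hH₁eq, ← hH₂eq]; exact hne
        refine ⟨AffineSubspace.mk' p (LinearMap.ker (fcR H₁).1 ⊓ LinearMap.ker (fcR H₂).1),
          ?_, span_insert_ne_top hf₁ hf₂ hneq hp₁' hp₂'⟩
        rintro z ⟨hz₁, hz₂⟩
        rw [AffineSubspace.mem_coe, AffineSubspace.mem_mk']
        have hz₁' : (fcR H₁).1 z = (fcR H₁).2 := by have := hH₁eq ▸ hz₁; exact this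
        have hz₂' : (fcR H₂).1 z = (fcR H₂).2 := by have := hH₂eq ▸ hz₂; exact this
        constructor <;> simp [LinearMap.mem_ker, vsub_eq_sub, map_sub, hz₁', hz₂', hp₁', hp₂']
      · -- covering
        intro z hz
        by_cases hzW : z ∈ W
        · left
          have hzfr : z ∉ frontier W := fun h => hz.2 (hcov𝓟 z ⟨h, hz.1⟩)
          rw [hWclosed.frontier_eq] at hzfr
          simp only [mem_diff, not_and, not_not] at hzfr
          exact hzfr hzW
        · right; exact hzW
      · -- B meets the interior
        have hxcl : x ∈ closure (interior W) := by
          rw [← hWclos]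
          exact hWclosed.closure_eq ▸ hx.1
        rw [_root_.mem_closure_iff] at hxcl
        exact hxcl B hBopen hxB
      · -- B meets the complement
        have hxcl : x ∈ closure Wᶜ := by
          rw [closure_compl]
          exact fun h => hx.2 h
        rw [_root_.mem_closure_iff] at hxcl
        exact hxcl B hBopen hxB
    obtain ⟨y, H₀, hyB, hyfr, hH₀𝓚, hyH₀, huniq⟩ := hclean
    obtain ⟨hf₀, hH₀eq⟩ := hfcR H₀ (h𝓚sub hH₀𝓚)
    -- a smaller ball around y avoiding all other raw hyperplanes
    set B' : Set E := B ∩ ⋂ H ∈ 𝓚 \ {H₀}, Hᶜ with hB'def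
    have hB'open : IsOpen B' := hBopen.inter
      ((h𝓚fin.subset diff_subset).isOpen_biInter
        (fun H hH => (hRawclosed H (h𝓚sub hH.1)).isOpen_compl))
    have hyB' : y ∈ B' := by
      refine ⟨hyB, ?_⟩
      simp only [mem_iInter, mem_compl_iff]
      rintro H ⟨hH𝓚, hHne⟩ hyH
      exact hHne (huniq H (h𝓚sub hH𝓚) hyH)
    have havoid : ∀ H ∈ Raw, (H ∩ B').Nonempty → H = H₀ := by
      rintro H hHRaw ⟨z, hzH, hzB'⟩
      by_cases hH𝓚 : H ∈ 𝓚
      · by_contra hne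
        have := hzB'.2
        simp only [mem_iInter, mem_compl_iff] at this
        exact this H ⟨hH𝓚, hne⟩ hzH
      · exfalso
        exact (eq_empty_iff_forall_notMem.mp (hBRaw H hHRaw hH𝓚) z) ⟨hzH, hzB'.1⟩
    -- apply the local analysis
    have hLR : {x : E | (fcR H₀).1 x ≤ (fcR H₀).2} ∪ {x : E | (fcR H₀).2 ≤ (fcR H₀).1 x}
        = univ := by
      apply eq_univ_of_forall
      intro z
      rcases le_total ((fcR H₀).1 z) ((fcR H₀).2) with h | h
      · exact Or.inl h
      · exact Or.inr h
    have hperC : ∀ C ∈ 𝓒, ∃ V T, IsOpen V ∧ y ∈ V ∧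
        (T = ∅ ∨ T = {x : E | (fcR H₀).1 x ≤ (fcR H₀).2} ∨
          T = {x : E | (fcR H₀).2 ≤ (fcR H₀).1 x} ∨ T = univ) ∧ C ∩ V = T ∩ V := by
      intro C hC
      apply polytope_local (h𝓒poly C hC).1 (h𝓒poly C hC).2.1 (hsC C hC) hf₀ hB'open hyB'
      intro p hp hp0 hne
      have hpRaw : {x : E | p.1 x = p.2} ∈ Raw := ⟨C, hC, p, hp, hp0, rfl⟩
      have h1 := havoid _ hpRaw hne
      rw [h1]
      exact hH₀eq
    obtain ⟨U, T, hU, hyU, hT, hUeq⟩ := sUnion_local h𝓒fin hLR hperC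
    have hWU : W ∩ U = T ∩ U := by rw [hWeq]; exact hUeq
    rcases hT with rfl | rfl | rfl | rfl
    · exfalso
      have : y ∈ W ∩ U := ⟨hWclosed.closure_eq ▸ hyfr.1, hyU⟩
      rw [hWU] at this
      exact this.1
    · exact ⟨H₀, h𝓚sub hH₀𝓚, hH₀𝓚.2, ⟨(fcR H₀).1, (fcR H₀).2, hf₀, hH₀eq, y, hyH₀, U, hU, hyU,
        Or.inl hWU⟩⟩
    · exact ⟨H₀, h𝓚sub hH₀𝓚, hH₀𝓚.2, ⟨(fcR H₀).1, (fcR H₀).2, hf₀, hH₀eq, y, hyH₀, U, hU, hyU,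
        Or.inr hWU⟩⟩
    · exfalso
      have hUW : U ⊆ W := by
        rw [univ_inter] at hWU
        intro z hz
        rw [← hWU] at hz
        exact hz.1
      exact hyfr.2 (interior_maximal hUW hU hyU)
  -- assemble
  refine ⟨hWcomp, hWclos, {H ∈ Raw | ProperlySupporting W H},
    hRawfin.subset (sep_subset _ _), fun H hH => hH.2, ?_⟩
  intro x hx
  obtain ⟨H₀, hH₀Raw, hxH₀, hPS⟩ := key x hx
  exact ⟨H₀, ⟨hH₀Raw, hPS⟩, hxH₀⟩

/-- A subset `W ⊂ ℝⁿ` is polytopal iff it is a finite union of convex polytopes. -/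
theorem isPolytopal_iff_finite_union_convexPolytopes
    (W : Set (EuclideanSpace ℝ (Fin n))) :
    IsPolytopal W ↔
      ∃ 𝓒 : Set (Set (EuclideanSpace ℝ (Fin n))), 𝓒.Finite ∧
        (∀ C ∈ 𝓒, IsConvexPolytope C) ∧ W = ⋃₀ 𝓒 := by
  constructor
  · exact forward
  · rintro ⟨𝓒, hfin, hpoly, hWeq⟩
    exact reverse hfin hpoly hWeq
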